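/- Theorem (CPNs simulate MPBNs), backward direction: Let f be a BN of dimension n and x, y ∈ B^n. If ⟨y⟩ is lim-reachable from ⟨x⟩ in the continuous Petri net N(f), then x →*_{mp} y in the most permissive semantics of f. -/
import Mathlib


open Relation Filter

/-! ### Boolean networks and their semantics -/

abbrev Config (n : ℕ) := Fin n → Bool
abbrev BN (n : ℕ) := Config n → Fin n → Bool

def Delta {n : ℕ} (x y : Config n) : Set (Fin n) := {i | x i ≠ y i}

def fa {n : ℕ} (f : BN n) (x y : Config n) : Prop :=
  ∃ i, Delta x y = {i} ∧ f x i = y i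

def syn {n : ℕ} (f : BN n) (x y : Config n) : Prop := ∀ i, f x i = y i

def ga {n : ℕ} (f : BN n) (x y : Config n) : Prop := ∀ i ∈ Delta x y, f x i = y i

/-! ### Most permissive semantics -/

inductive MPV where
  | b : Bool → MPV
  | up : MPV
  | down : MPV
deriving DecidableEq

abbrev MPConfig (n : ℕ) := Fin n → MPV

def toMP {n : ℕ} (x : Config n) : MPConfig n := fun i => .b (x i)

def beta {n : ℕ} (xh : MPConfig n) : Set (Config n) :=
  {x | ∀ i v, xh i = .b v → x i = v}

def mpStep {n : ℕ} (f : BN n) (xh yh : MPConfig n) : Prop :=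
  ∃ i, (∀ j, j ≠ i → xh j = yh j) ∧ xh i ≠ yh i ∧
    ((xh i = .up ∧ yh i = .b true) ∨
     (xh i = .down ∧ yh i = .b false) ∨
     (xh i ≠ .b true ∧ yh i = .up ∧ ∃ x ∈ beta xh, f x i = true) ∨
     (xh i ≠ .b false ∧ yh i = .down ∧ ∃ x ∈ beta xh, f x i = false))

def mp {n : ℕ} (f : BN n) (x y : Config n) : Prop :=
  ReflTransGen (mpStep f) (toMP x) (toMP y)

/-! ### Petri nets (discrete and continuous) -/

structure Net (P T : Type) where
  wPT : P → T → ℕ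
  wTP : T → P → ℕ

def dfire {P T : Type} (N : Net P T) (t : T) (M M' : P → ℕ) : Prop :=
  (∀ p, N.wPT p t ≤ M p) ∧ ∀ p, M' p = M p - N.wPT p t + N.wTP t p

def dReach {P T : Type} (N : Net P T) : (P → ℕ) → (P → ℕ) → Prop :=
  ReflTransGen (fun M M' => ∃ t, dfire N t M M')

def cfire {P T : Type} (N : Net P T) (t : T) (α : ℝ) (m m' : P → ℝ) : Prop :=
  0 ≤ α ∧ (∀ p, α * N.wPT p t ≤ m p) ∧
    ∀ p, m' p = m p - α * N.wPT p t + α * N.wTP t p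

def cReach {P T : Type} (N : Net P T) : (P → ℝ) → (P → ℝ) → Prop :=
  ReflTransGen (fun m m' => ∃ t α, cfire N t α m m')

def limReach {P T : Type} (N : Net P T) (m m' : P → ℝ) : Prop :=
  ∃ ms : ℕ → P → ℝ, ms 0 = m ∧
    (∀ k, ∃ t α, cfire N t α (ms k) (ms (k+1))) ∧
    Tendsto ms atTop (nhds m')

def IsTrap {P T : Type} (N : Net P T) (S : Set P) : Prop :=
  ∀ t, (∃ p ∈ S, 0 < N.wPT p t) → ∃ p ∈ S, 0 < N.wTP t p

def enabPos {P T : Type} (N : Net P T) (t : T) (m : P → ℝ) : Prop :=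
  ∀ p, 0 < N.wPT p t → 0 < m p

def enabGe {P T : Type} (N : Net P T) (t : T) (m : P → ℝ) (c : ℝ) : Prop :=
  ∀ p, 0 < N.wPT p t → c * N.wPT p t ≤ m p

/-! ### Petri net encoding of Boolean networks -/

abbrev Clause (n : ℕ) := Fin n → Option Bool

def satC {n : ℕ} (z : Config n) (C : Clause n) : Prop :=
  ∀ j v, C j = some v → z j = v

structure ETrans (n : ℕ) where
  i : Fin n
  s : Bool
  C : Clause n

abbrev EPlace (n : ℕ) := Fin n × Bool

def encNet (n : ℕ) : Net (EPlace n) (ETrans n) where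
  wPT := fun p t =>
    if p.1 = t.i then (if p.2 = !t.s then 1 else 0)
    else (if t.C p.1 = some p.2 then 1 else 0)
  wTP := fun t p =>
    if p.1 = t.i then (if p.2 = t.s then 1 else 0)
    else (if t.C p.1 = some p.2 then 1 else 0)

def mu {n : ℕ} (xh : MPConfig n) : Set (EPlace n → ℝ) :=
  {m | (∀ p, 0 ≤ m p) ∧ ∀ i,
    m (i, false) + m (i, true) = 1 ∧
    (∀ v, xh i = .b v → m (i, v) = 1) ∧
    ((xh i = .up ∨ xh i = .down) →
      0 < m (i, false) ∧ m (i, false) < 1 ∧ 0 < m (i, true) ∧ m (i, true) < 1)}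

noncomputable def canon {n : ℕ} (xh : MPConfig n) : EPlace n → ℝ := fun p =>
  match xh p.1 with
  | .b v => if p.2 = v then 1 else 0
  | _ => 1/2

def validT {n : ℕ} (D : Fin n → Bool → Set (Clause n)) (t : ETrans n) : Prop :=
  t.C ∈ D t.i t.s

def IsDNF {n : ℕ} (f : BN n) (D : Fin n → Bool → Set (Clause n)) : Prop :=
  (∀ i s z, (∃ C ∈ D i s, satC z C) ↔ (z i = !s ∧ f z i = s)) ∧
  (∀ i s C, C ∈ D i s → C i = some (!s))

def cReachG {P T : Type} (N : Net P T) (good : T → Prop) :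
    (P → ℝ) → (P → ℝ) → Prop :=
  ReflTransGen (fun m m' => ∃ t, good t ∧ ∃ α, cfire N t α m m')

def climReachG {P T : Type} (N : Net P T) (good : T → Prop) (m m' : P → ℝ) : Prop :=
  ∃ ms : ℕ → P → ℝ, ms 0 = m ∧
    (∀ k, ∃ t, good t ∧ ∃ α, cfire N t α (ms k) (ms (k+1))) ∧
    Tendsto ms atTop (nhds m')

/-! ### Auxiliary development for the backward simulation -/

namespace CPNBack

open Function

/-- The transient value reached when moving towards Boolean value `s`. -/
def trv (s : Bool) : MPV := match s with | true => .up | false => .down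

lemma trv_ne_b (s v : Bool) : trv s ≠ .b v := by cases s <;> simp [trv]

lemma trv_inj {s s' : Bool} (h : trv s = trv s') : s = s' := by
  cases s <;> cases s' <;> simp_all [trv]

/-- Compatibility of an MP configuration with a marking (weak invariant). -/
structure Compat {n : ℕ} (vh : MPConfig n) (m : EPlace n → ℝ) : Prop where
  nonneg : ∀ p, 0 ≤ m p
  sum : ∀ i : Fin n, m (i, false) + m (i, true) = 1
  bool : ∀ i v, vh i = .b v → m (i, v) = 1
  up : ∀ i, vh i = .up → m (i, false) < 1
  down : ∀ i, vh i = .down → m (i, true) < 1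

lemma Compat.le_one {n : ℕ} {vh : MPConfig n} {m : EPlace n → ℝ}
    (hc : Compat vh m) (p : EPlace n) : m p ≤ 1 := by
  obtain ⟨i, v⟩ := p
  have h1 := hc.nonneg (i, false)
  have h2 := hc.nonneg (i, true)
  have h3 := hc.sum i
  cases v <;> linarith

lemma Compat.bool_zero {n : ℕ} {vh : MPConfig n} {m : EPlace n → ℝ}
    (hc : Compat vh m) {i : Fin n} {v : Bool} (h : vh i = .b v) : m (i, !v) = 0 := by
  have h1 := hc.bool i v h
  have h3 := hc.sum i
  cases v
  · simp only [Bool.not_false]; linarith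
  · simp only [Bool.not_true]; linarith

lemma Compat.trv_lt {n : ℕ} {vh : MPConfig n} {m : EPlace n → ℝ}
    (hc : Compat vh m) {i : Fin n} {s : Bool} (h : vh i = trv s) : m (i, !s) < 1 := by
  cases s
  · simpa using hc.down i h
  · simpa using hc.up i h

section Fire

variable {n : ℕ} {t : ETrans n} {α : ℝ} {m m' : EPlace n → ℝ}

lemma fire_off (hf : cfire (encNet n) t α m m') {j : Fin n} (hj : j ≠ t.i) (v : Bool) :
    m' (j, v) = m (j, v) := by
  have h := hf.2.2 (j, v)
  have h1 : (encNet n).wPT (j, v) t = (encNet n).wTP t (j, v) := by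
    simp [encNet, hj]
  rw [h, h1]; ring

lemma fire_tgt (hf : cfire (encNet n) t α m m') : m' (t.i, t.s) = m (t.i, t.s) + α := by
  have h := hf.2.2 (t.i, t.s)
  have h1 : (encNet n).wPT (t.i, t.s) t = 0 := by
    cases hs : t.s <;> simp [encNet, hs]
  have h2 : (encNet n).wTP t (t.i, t.s) = 1 := by simp [encNet]
  rw [h, h1, h2]; push_cast; ring

lemma fire_src (hf : cfire (encNet n) t α m m') : m' (t.i, !t.s) = m (t.i, !t.s) - α := by
  have h := hf.2.2 (t.i, !t.s)
  have h1 : (encNet n).wPT (t.i, !t.s) t = 1 := by simp [encNet]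
  have h2 : (encNet n).wTP t (t.i, !t.s) = 0 := by
    cases hs : t.s <;> simp [encNet, hs]
  rw [h, h1, h2]; push_cast; ring

lemma fire_enab (hf : cfire (encNet n) t α m m') : α ≤ m (t.i, !t.s) := by
  have h := hf.2.1 (t.i, !t.s)
  have h1 : (encNet n).wPT (t.i, !t.s) t = 1 := by simp [encNet]
  rw [h1] at h; push_cast at h; linarith

lemma fire_pos (hf : cfire (encNet n) t α m m') (hα : 0 < α) {p : EPlace n}
    (hw : (encNet n).wPT p t ≠ 0) : 0 < m p := by
  have h := hf.2.1 p
  have h1 : (1 : ℝ) ≤ ((encNet n).wPT p t : ℝ) := by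
    exact_mod_cast Nat.one_le_iff_ne_zero.mpr hw
  nlinarith

end Fire

/-- Default completion of a clause witness. -/
def dfltOf {n : ℕ} (vh : MPConfig n) : Config n := fun j =>
  match vh j with
  | .b v => v
  | _ => true

lemma dfltOf_b {n : ℕ} {vh : MPConfig n} {j : Fin n} {v : Bool} (h : vh j = .b v) :
    dfltOf vh j = v := by
  unfold dfltOf; rw [h]

/-- The canonical witness configuration associated with a clause. -/
def witOf {n : ℕ} (vh : MPConfig n) (C : Clause n) : Config n := fun j =>
  (C j).getD (dfltOf vh j)

lemma exists_witness {n : ℕ} {f : BN n} {D : Fin n → Bool → Set (Clause n)} (hD : IsDNF f D)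
    {vh : MPConfig n} {m m' : EPlace n → ℝ} {t : ETrans n} {α : ℝ}
    (hc : Compat vh m) (ht : validT D t) (hf : cfire (encNet n) t α m m') (hα : 0 < α) :
    vh t.i ≠ .b t.s ∧ ∃ z ∈ beta vh, f z t.i = t.s := by
  have hzero : ∀ j u, vh j = .b u → (encNet n).wPT (j, !u) t = 0 := by
    intro j u hb
    by_contra hw
    exact absurd (hc.bool_zero hb) (ne_of_gt (fire_pos hf hα hw))
  have hne : vh t.i ≠ .b t.s := by
    intro hb
    have h0 := hc.bool_zero hb
    have h1 := fire_enab hf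
    linarith
  refine ⟨hne, witOf vh t.C, ?_, ?_⟩
  · -- membership in beta vh
    intro j u hju
    cases hcj : t.C j with
    | none => simp [witOf, hcj, dfltOf_b hju]
    | some w =>
      have hw0 := hzero j u hju
      have hwu : w = u := by
        by_cases hji : j = t.i
        · subst hji
          have hC := hD.2 t.i t.s t.C ht
          rw [hC] at hcj
          have hw' : w = !t.s := (Option.some.inj hcj).symm
          have hu : u = !t.s := by
            simp [encNet] at hw0
            cases u <;> cases hs : t.s <;> simp_all
          rw [hw', hu]
        · have hne2 : t.C j ≠ some (!u) := by
            intro hcontra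
            simp [encNet, hji, hcontra] at hw0
          rw [hcj] at hne2
          cases w <;> cases u <;> simp_all
      simp [witOf, hcj, hwu]
  · have hsat : satC (witOf vh t.C) t.C := by
      intro j v hv
      simp [witOf, hv]
    exact ((hD.1 t.i t.s (witOf vh t.C)).mp ⟨t.C, ht, hsat⟩).2

lemma compat_fire {n : ℕ} {vh : MPConfig n} {m m' : EPlace n → ℝ} {t : ETrans n} {α : ℝ}
    (hc : Compat vh m) (hf : cfire (encNet n) t α m m') (hα : 0 < α) :
    Compat (Function.update vh t.i (trv t.s)) m' := by
  have hsrc := fire_src hf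
  have htgt := fire_tgt hf
  have henab := fire_enab hf
  constructor
  · rintro ⟨j, v⟩
    by_cases hj : j = t.i
    · subst hj
      by_cases hv : v = t.s
      · subst hv; rw [htgt]; have := hc.nonneg (t.i, t.s); linarith
      · have hv' : v = !t.s := by cases v <;> cases hs : t.s <;> simp_all
        rw [hv', hsrc]; linarith
    · rw [fire_off hf hj]; exact hc.nonneg _
  · intro i
    by_cases hi : i = t.i
    · subst hi
      have hs2 := hc.sum t.i
      cases hs : t.s
      · rw [hs] at hsrc htgt
        simp only [Bool.not_false] at hsrc
        rw [htgt, hsrc]; linarith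
      · rw [hs] at hsrc htgt
        simp only [Bool.not_true] at hsrc
        rw [htgt, hsrc]; linarith
    · rw [fire_off hf hi, fire_off hf hi]; exact hc.sum i
  · intro i v hb
    by_cases hi : i = t.i
    · subst hi; rw [Function.update_self] at hb; exact absurd hb (trv_ne_b _ _)
    · rw [Function.update_of_ne hi] at hb
      rw [fire_off hf hi]; exact hc.bool i v hb
  · intro i hb
    by_cases hi : i = t.i
    · subst hi; rw [Function.update_self] at hb
      have hs : t.s = true := by cases hs : t.s <;> simp_all [trv]
      rw [hs] at hsrc
      simp only [Bool.not_true] at hsrc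
      rw [hsrc]
      have := hc.le_one (t.i, false); linarith
    · rw [Function.update_of_ne hi] at hb
      rw [fire_off hf hi]; exact hc.up i hb
  · intro i hb
    by_cases hi : i = t.i
    · subst hi; rw [Function.update_self] at hb
      have hs : t.s = false := by cases hs : t.s <;> simp_all [trv]
      rw [hs] at hsrc
      simp only [Bool.not_false] at hsrc
      rw [hsrc]
      have := hc.le_one (t.i, true); linarith
    · rw [Function.update_of_ne hi] at hb
      rw [fire_off hf hi]; exact hc.down i hb

lemma rtg_update {n : ℕ} {f : BN n} {vh : MPConfig n} {i : Fin n} {s : Bool}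
    (h1 : vh i ≠ .b s) (hw : ∃ z ∈ beta vh, f z i = s) :
    Relation.ReflTransGen (mpStep f) vh (Function.update vh i (trv s)) := by
  by_cases h2 : vh i = trv s
  · have heq : Function.update vh i (trv s) = vh := by
      rw [← h2, Function.update_eq_self]
    rw [heq]
  · refine Relation.ReflTransGen.single
      ⟨i, fun j hj => (Function.update_of_ne hj _ _).symm, ?_, ?_⟩
    · rw [Function.update_self]; exact h2
    · simp only [Function.update_self]
      cases s
      · exact Or.inr (Or.inr (Or.inr ⟨h1, rfl, hw⟩))
      · exact Or.inr (Or.inr (Or.inl ⟨h1, rfl, hw⟩))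

lemma compat_canon {n : ℕ} (xh : MPConfig n) : Compat xh (canon xh) := by
  constructor
  · rintro ⟨i, v⟩
    rcases hxi : xh i with u | _ | _ <;> simp [canon, hxi] <;> split <;> norm_num
  · intro i
    rcases hxi : xh i with u | _ | _
    · cases u <;> simp [canon, hxi]
    · simp [canon, hxi]; norm_num
    · simp [canon, hxi]; norm_num
  · intro i v hb; simp [canon, hb]
  · intro i hb; simp [canon, hb]; norm_num
  · intro i hb; simp [canon, hb]; norm_num

lemma chain_flips {n : ℕ} {f : BN n} (v w : MPConfig n)
    (h : ∀ i, v i = w i ∨ (v i ≠ w i ∧ (∀ u, v i ≠ .b u) ∧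
      ((w i = .up ∧ ∃ z ∈ beta v, f z i = true) ∨
       (w i = .down ∧ ∃ z ∈ beta v, f z i = false)))) :
    Relation.ReflTransGen (mpStep f) v w := by
  have key : ∀ S : Finset (Fin n),
      Relation.ReflTransGen (mpStep f) v (fun i => if i ∈ S then w i else v i) := by
    intro S
    induction S using Finset.induction_on with
    | empty => simpa using Relation.ReflTransGen.refl
    | @insert a S ha ih =>
      refine ih.trans ?_
      rcases h a with hva | ⟨hne, hnb, hcase⟩
      · have heq : (fun i => if i ∈ insert a S then w i else v i)
            = (fun i => if i ∈ S then w i else v i) := by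
          funext j
          by_cases hj : j = a
          · subst hj
            simp [ha, hva]
          · simp [hj]
        rw [heq]
      · set u : MPConfig n := fun i => if i ∈ S then w i else v i with hu
        have hupd : (fun i => if i ∈ insert a S then w i else v i)
            = Function.update u a (w a) := by
          funext j
          by_cases hj : j = a
          · subst hj
            rw [Function.update_self]
            simp [Finset.mem_insert]
          · rw [Function.update_of_ne hj]
            simp [hu, Finset.mem_insert, hj]
        rw [hupd]
        have hua : u a = v a := by simp [hu, ha]
        have hbeta : ∀ z, z ∈ beta v → z ∈ beta u := by
          intro z hz j uu hju
          apply hz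
          by_cases hjS : j ∈ S
          · have huj : u j = w j := by simp [hu, hjS]
            rw [huj] at hju
            rcases h j with hvj | ⟨_, _, hcj⟩
            · rw [hvj]; exact hju
            · rcases hcj with ⟨hwj, _⟩ | ⟨hwj, _⟩ <;> rw [hwj] at hju <;> exact absurd hju (by simp)
          · have huj : u j = v j := by simp [hu, hjS]
            rw [← huj]; exact hju
        refine Relation.ReflTransGen.single
          ⟨a, fun j hj => (Function.update_of_ne hj _ _).symm, ?_, ?_⟩
        · rw [Function.update_self, hua]; exact hne
        · simp only [Function.update_self]
          rcases hcase with ⟨hwa, z, hz, hfz⟩ | ⟨hwa, z, hz, hfz⟩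
          · exact Or.inr (Or.inr (Or.inl
              ⟨by rw [hua]; exact hnb true, hwa, ⟨z, hbeta z hz, hfz⟩⟩))
          · exact Or.inr (Or.inr (Or.inr
              ⟨by rw [hua]; exact hnb false, hwa, ⟨z, hbeta z hz, hfz⟩⟩))
  have hres := key Finset.univ
  have heq : (fun i => if i ∈ Finset.univ then w i else v i) = w := by
    funext j; simp
  rwa [heq] at hres

lemma chain_collapse {n : ℕ} {f : BN n} (v w : MPConfig n)
    (h : ∀ i, v i = w i ∨ (v i = .up ∧ w i = .b true) ∨ (v i = .down ∧ w i = .b false)) :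
    Relation.ReflTransGen (mpStep f) v w := by
  have key : ∀ S : Finset (Fin n),
      Relation.ReflTransGen (mpStep f) v (fun i => if i ∈ S then w i else v i) := by
    intro S
    induction S using Finset.induction_on with
    | empty => simpa using Relation.ReflTransGen.refl
    | @insert a S ha ih =>
      refine ih.trans ?_
      set u : MPConfig n := fun i => if i ∈ S then w i else v i with hu
      have hupd : (fun i => if i ∈ insert a S then w i else v i)
          = Function.update u a (w a) := by
        funext j
        by_cases hj : j = a
        · subst hj
          rw [Function.update_self]
          simp [Finset.mem_insert]
        · rw [Function.update_of_ne hj]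
          simp [hu, Finset.mem_insert, hj]
      rw [hupd]
      have hua : u a = v a := by simp [hu, ha]
      rcases h a with hva | ⟨hva, hwa⟩ | ⟨hva, hwa⟩
      · have heq2 : Function.update u a (w a) = u := by
          rw [← hva, ← hua, Function.update_eq_self]
        rw [heq2]
      · refine Relation.ReflTransGen.single
          ⟨a, fun j hj => (Function.update_of_ne hj _ _).symm, ?_, ?_⟩
        · rw [Function.update_self, hua, hva, hwa]; simp
        · simp only [Function.update_self]
          exact Or.inl ⟨by rw [hua]; exact hva, hwa⟩
      · refine Relation.ReflTransGen.single
          ⟨a, fun j hj => (Function.update_of_ne hj _ _).symm, ?_, ?_⟩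
        · rw [Function.update_self, hua, hva, hwa]; simp
        · simp only [Function.update_self]
          exact Or.inr (Or.inl ⟨by rw [hua]; exact hva, hwa⟩)
  have hres := key Finset.univ
  have heq : (fun i => if i ∈ Finset.univ then w i else v i) = w := by
    funext j; simp
  rwa [heq] at hres

section Vhat

variable {n : ℕ} {g : ℕ → MPConfig n} {tk : ℕ → ETrans n} {ak : ℕ → ℝ}

/-- Recurrence hypothesis for the abstract MP-configuration process. -/
def VhRec (g : ℕ → MPConfig n) (tk : ℕ → ETrans n) (ak : ℕ → ℝ) : Prop :=
  ∀ k, g (k+1) = if 0 < ak k then Function.update (g k) (tk k).i (trv (tk k).s) else g k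

lemma VhRec.succ_pos (hr : VhRec g tk ak) {k : ℕ} (hp : 0 < ak k) :
    g (k+1) = Function.update (g k) (tk k).i (trv (tk k).s) := by
  rw [hr k, if_pos hp]

lemma VhRec.succ_neg (hr : VhRec g tk ak) {k : ℕ} (hp : ¬ 0 < ak k) :
    g (k+1) = g k := by
  rw [hr k, if_neg hp]

lemma VhRec.change (hr : VhRec g tk ak) {k : ℕ} {i : Fin n}
    (h : g (k+1) i ≠ g k i) :
    0 < ak k ∧ (tk k).i = i ∧ g (k+1) i = trv (tk k).s := by
  by_cases hp : 0 < ak k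
  · rw [hr.succ_pos hp] at h ⊢
    by_cases hi : (tk k).i = i
    · subst hi; exact ⟨hp, rfl, Function.update_self _ _ _⟩
    · exact absurd (Function.update_of_ne (fun hc => hi hc.symm) _ _) h
  · rw [hr.succ_neg hp] at h; exact absurd rfl h

lemma VhRec.bool_back (hr : VhRec g tk ak) {k k' : ℕ} (hkk : k ≤ k') {i : Fin n} {v : Bool}
    (h : g k' i = .b v) : g k i = .b v := by
  revert h
  induction k', hkk using Nat.le_induction with
  | base => exact id
  | succ k' hk' ih =>
    intro h
    apply ih
    by_cases hch : g (k'+1) i = g k' i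
    · rw [← hch]; exact h
    · have hh := (hr.change hch).2.2
      rw [hh] at h
      exact absurd h (trv_ne_b _ _)

end Vhat

end CPNBack
namespace CPNBack

lemma bool_ne_imp {a b : Bool} (h : a ≠ b) : a = !b := by
  cases a <;> cases b <;> simp_all

end CPNBack

open CPNBack

/-- CPNs simulate MPBNs, backward direction: if ⟨y⟩ is
lim-reachable from ⟨x⟩ in the continuous Petri net N(f) (firing only
transitions of the encoding), then y is MP-reachable from x. -/
theorem cpn_simulates_mpbn_backward {n : ℕ} (f : BN n)
    (D : Fin n → Bool → Set (Clause n)) (hD : IsDNF f D)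
    (x y : Config n)
    (h : climReachG (encNet n) (validT D) (canon (toMP x)) (canon (toMP y))) :
    mp f x y := by
  classical
  obtain ⟨ms, h0, hstep, hlim⟩ := h
  choose tk hvalid ak hfire using hstep
  -- the abstract MP-configuration process tracking the run
  obtain ⟨vh, hvh0, hrec⟩ : ∃ g : ℕ → MPConfig n, g 0 = toMP x ∧ VhRec g tk ak :=
    ⟨fun k => Nat.rec (toMP x)
      (fun k v => if 0 < ak k then Function.update v (tk k).i (trv (tk k).s) else v) k,
      rfl, fun k => rfl⟩
  have hms_eq : ∀ k, ¬ 0 < ak k → ms (k+1) = ms k := by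
    intro k hk
    funext p
    have h1 := (hfire k).1
    have h2 := (hfire k).2.2 p
    have h3 : ak k = 0 := le_antisymm (not_lt.mp hk) h1
    rw [h2, h3]; ring
  -- main invariant
  have inv : ∀ k, Compat (vh k) (ms k) ∧
      Relation.ReflTransGen (mpStep f) (toMP x) (vh k) := by
    intro k
    induction k with
    | zero =>
      constructor
      · rw [hvh0, h0]; exact compat_canon (toMP x)
      · rw [hvh0]
    | succ k ih =>
      by_cases hp : 0 < ak k
      · have hwit := exists_witness hD ih.1 (hvalid k) (hfire k) hp
        refine ⟨?_, ?_⟩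
        · rw [hrec.succ_pos hp]
          exact compat_fire ih.1 (hfire k) hp
        · rw [hrec.succ_pos hp]
          exact ih.2.trans (rtg_update hwit.1 hwit.2)
      · rw [hrec.succ_neg hp, hms_eq k hp]
        exact ih
  -- pointwise limits
  have hptw : ∀ p, Filter.Tendsto (fun k => ms k p) Filter.atTop (nhds (canon (toMP y) p)) :=
    fun p => tendsto_pi_nhds.mp hlim p
  have hcanon_y : ∀ (i : Fin n) (v : Bool),
      canon (toMP y) (i, v) = if v = y i then 1 else 0 := by
    intro i v; simp [canon, toMP]
  -- eventually-constant coordinates and the stabilization time K0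
  set EC : Fin n → Prop := fun i => ∃ K, ∀ k, K ≤ k → vh k i = vh K i with hECdef
  have hKi : ∀ i, ∃ K, (EC i → ∀ k, K ≤ k → vh k i = vh K i) ∧
      (¬ EC i → ∀ v, vh K i ≠ .b v) := by
    intro i
    by_cases hec : EC i
    · obtain ⟨K, hK⟩ := hec
      exact ⟨K, fun _ => hK, fun hn => absurd ⟨K, hK⟩ hn⟩
    · have hchg : ∃ k, vh (k+1) i ≠ vh k i := by
        by_contra hno
        push_neg at hno
        have hcst : ∀ k, vh k i = vh 0 i := by
          intro k
          induction k with
          | zero => rfl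
          | succ k ihk => rw [hno k, ihk]
        exact hec ⟨0, fun k _ => hcst k⟩
      obtain ⟨k1, hk1⟩ := hchg
      refine ⟨k1 + 1, fun hec' => absurd hec' hec, fun _ v => ?_⟩
      rw [(hrec.change hk1).2.2]
      exact trv_ne_b _ _
  choose Ki hKi1 hKi2 using hKi
  set K0 := Finset.univ.sup Ki with hK0def
  have hK0 : ∀ i, Ki i ≤ K0 := fun i => Finset.le_sup (Finset.mem_univ i)
  have hEC_const : ∀ i, EC i → ∀ k, K0 ≤ k → vh k i = vh K0 i := by
    intro i hec k hk
    rw [hKi1 i hec k (le_trans (hK0 i) hk), hKi1 i hec K0 (hK0 i)]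
  have hNEC_nb : ∀ i, ¬ EC i → ∀ k, K0 ≤ k → ∀ v, vh k i ≠ .b v := by
    intro i hec k hk v hb
    exact hKi2 i hec v (hrec.bool_back (le_trans (hK0 i) hk) hb)
  -- places that stay at value 1 identify the limit value
  have hconst1 : ∀ (i : Fin n) (v : Bool),
      (∀ k, K0 ≤ k → ms k (i, v) = 1) → v = y i := by
    intro i v hone
    have htend : Filter.Tendsto (fun k => ms k (i, v)) Filter.atTop (nhds 1) := by
      refine Filter.Tendsto.congr' ?_ tendsto_const_nhds
      exact Filter.eventually_atTop.mpr ⟨K0, fun k hk => (hone k hk).symm⟩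
    have huniq := tendsto_nhds_unique htend (hptw (i, v))
    rw [hcanon_y i v] at huniq
    by_contra hvy
    rw [if_neg hvy] at huniq
    norm_num at huniq
  have hbool_y : ∀ (i : Fin n) (v : Bool), vh K0 i = .b v → v = y i ∧ EC i := by
    intro i v hb
    have hec : EC i := by
      by_contra hnec
      exact hNEC_nb i hnec K0 le_rfl v hb
    refine ⟨?_, hec⟩
    apply hconst1 i v
    intro k hk
    exact (inv k).1.bool i v (by rw [hEC_const i hec k hk]; exact hb)
  -- eventually-constant transient coordinates have the matching limit value
  have htrans_y : ∀ (i : Fin n) (s : Bool),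
      (∀ k, K0 ≤ k → vh k i = trv s) → y i = s := by
    intro i s hcon
    have hmono : ∀ k, K0 ≤ k → ms k (i, !s) ≤ ms K0 (i, !s) := by
      intro k hk
      induction k, hk using Nat.le_induction with
      | base => exact le_rfl
      | succ k hk2 ih =>
        refine le_trans ?_ ih
        by_cases hp : 0 < ak k
        · by_cases hi : (tk k).i = i
          · have hs : (tk k).s = s := by
              have h2 : vh (k+1) i = trv (tk k).s := by
                rw [hrec.succ_pos hp, ← hi, Function.update_self]
              have h3 := hcon (k+1) (by omega)
              rw [h2] at h3
              exact trv_inj h3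
            have h4 := fire_src (hfire k)
            rw [hi, hs] at h4
            rw [h4]
            linarith
          · rw [fire_off (hfire k) (fun hc => hi hc.symm)]
        · rw [hms_eq k hp]
    have hlt : ms K0 (i, !s) < 1 := (inv K0).1.trv_lt (hcon K0 le_rfl)
    have hle : canon (toMP y) (i, !s) ≤ ms K0 (i, !s) :=
      le_of_tendsto (hptw (i, !s)) (Filter.eventually_atTop.mpr ⟨K0, hmono⟩)
    by_contra hys
    have hyns : y i = !s := bool_ne_imp hys
    rw [hcanon_y, if_pos hyns.symm] at hle
    linarith
  -- oscillating coordinates fire in both directions after K0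
  have hosc : ∀ i, ¬ EC i → ∀ s : Bool,
      ∃ k, K0 ≤ k ∧ 0 < ak k ∧ (tk k).i = i ∧ (tk k).s = s := by
    intro i hec s
    by_contra hno
    push_neg at hno
    apply hec
    rcases em (∃ k, K0 ≤ k ∧ vh (k+1) i ≠ vh k i) with ⟨k1, hk1, hne⟩ | hstab
    · obtain ⟨hp, hti, hval⟩ := hrec.change hne
      have hs1 : (tk k1).s = !s := bool_ne_imp (hno k1 hk1 hp hti)
      have hval' : vh (k1+1) i = trv !s := by rw [hval, hs1]
      have hconst : ∀ k, k1+1 ≤ k → vh k i = trv !s := by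
        intro k hk
        induction k, hk using Nat.le_induction with
        | base => exact hval'
        | succ k hk2 ih =>
          by_cases hch : vh (k+1) i = vh k i
          · rw [hch]; exact ih
          · obtain ⟨hp2, hti2, hv2⟩ := hrec.change hch
            have hs2 : (tk k).s = !s := bool_ne_imp (hno k (by omega) hp2 hti2)
            rw [hv2, hs2]
      exact ⟨k1+1, fun k hk => by rw [hconst k hk, hval']⟩
    · push_neg at hstab
      refine ⟨K0, fun k hk => ?_⟩
      induction k, hk using Nat.le_induction with
      | base => rfl
      | succ k hk2 ih => rw [hstab k hk2, ih]
  -- boolean coordinates of vh K0 persist forever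
  have hbeta_stable : ∀ k, K0 ≤ k → ∀ (j : Fin n) (u : Bool),
      vh K0 j = .b u → vh k j = .b u := by
    intro k hk j u hb
    rw [hEC_const j (hbool_y j u hb).2 k hk]
    exact hb
  -- the target intermediate configuration
  set w : MPConfig n := fun i =>
    if ∃ v, vh K0 i = .b v then vh K0 i else trv (y i) with hw
  have hw_b : ∀ i v, vh K0 i = .b v → w i = .b v := by
    intro i v hb
    simp only [hw]
    rw [if_pos ⟨v, hb⟩, hb]
  have hw_t : ∀ i, (∀ v, vh K0 i ≠ .b v) → w i = trv (y i) := by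
    intro i hnb
    simp only [hw]
    rw [if_neg (by push_neg; exact hnb)]
  have hB : Relation.ReflTransGen (mpStep f) (vh K0) w := by
    apply chain_flips
    intro i
    by_cases hbi : ∃ v, vh K0 i = .b v
    · obtain ⟨v, hb⟩ := hbi
      left; rw [hb, hw_b i v hb]
    · push_neg at hbi
      have hwi := hw_t i hbi
      by_cases heq : vh K0 i = w i
      · left; exact heq
      · right
        refine ⟨heq, hbi, ?_⟩
        have hnec : ¬ EC i := by
          intro hec
          apply heq
          have hex : ∃ s, vh K0 i = trv s := by
            rcases hvi : vh K0 i with v | _ | _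
            · exact absurd hvi (hbi v)
            · exact ⟨true, rfl⟩
            · exact ⟨false, rfl⟩
          obtain ⟨s, hs⟩ := hex
          have hys : y i = s := htrans_y i s (fun k hk => by
            rw [hEC_const i hec k hk]; exact hs)
          rw [hwi, hys, hs]
        obtain ⟨k, hk, hp, hti, hts⟩ := hosc i hnec (y i)
        have hwit := (exists_witness hD (inv k).1 (hvalid k) (hfire k) hp).2
        rw [hti, hts] at hwit
        obtain ⟨z, hz, hfz⟩ := hwit
        have hz0 : z ∈ beta (vh K0) := fun j u hju => hz j u (hbeta_stable k hk j u hju)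
        cases hy : y i
        · right
          exact ⟨by rw [hwi, hy]; rfl, z, hz0, hy ▸ hfz⟩
        · left
          exact ⟨by rw [hwi, hy]; rfl, z, hz0, hy ▸ hfz⟩
  have hC : Relation.ReflTransGen (mpStep f) w (toMP y) := by
    apply chain_collapse
    intro i
    by_cases hbi : ∃ v, vh K0 i = .b v
    · obtain ⟨v, hb⟩ := hbi
      left
      rw [hw_b i v hb, (hbool_y i v hb).1]
      rfl
    · push_neg at hbi
      have hwi := hw_t i hbi
      cases hy : y i
      · right; right
        refine ⟨by rw [hwi, hy]; rfl, ?_⟩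
        rw [show toMP y i = .b (y i) from rfl, hy]
      · right; left
        refine ⟨by rw [hwi, hy]; rfl, ?_⟩
        rw [show toMP y i = .b (y i) from rfl, hy]
  exact ((inv K0).2.trans hB).trans hC
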